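/- Let (Ω, F, P) be a probability space, let K, N ∈ ℕ, let σ² > 0, fix a user index u ∈ {1,…,N}, and let h₁,…,h_N : Ω → ℂ^K and v_u : Ω → ℂ^K be random vectors. Define the instantaneous SINR s_u(p, ω) = p_u |h_u(ω)^H v_u(ω)|² / (∑_{k ≠ u} p_k |h_k(ω)^H v_u(ω)|² + σ²) and the achievable rate r_u(p) = E[log(1 + s_u(p, ω))]. Assume that for every p ∈ ℝ₊₊^N the expectation r_u(p) is well defined and finite, that E[|h_u(ω)^H v_u(ω)|²] < ∞, and that |h_u(ω)^H v_u(ω)| ≠ 0 for almost every ω ∈ Ω. Then the function f_u : ℝ₊₊^N → ℝ₊₊ defined by f_u(p) = p_u / r_u(p) is an MSP function. -/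

import Mathlib

open MeasureTheory Filter

/-- The open positive cone in `ℝ^N`. -/
def PosCone (N : ℕ) : Set (Fin N → ℝ) := {x | ∀ i, 0 < x i}

/-- A monotonic, scalable, and positive (MSP) function on the positive cone `ℝ₊₊^N`:
(0) it is positive on the cone, (i) monotone on the cone, (ii) scalable, and
(iii) its infimum over the cone is positive. -/
def IsMSPFun {N : ℕ} (f : (Fin N → ℝ) → ℝ) : Prop :=
  (∀ x : Fin N → ℝ, (∀ i, 0 < x i) → 0 < f x) ∧
  (∀ x y : Fin N → ℝ, (∀ i, 0 < x i) → (∀ i, 0 < y i) → x ≤ y → f x ≤ f y) ∧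
  (∀ α : ℝ, 1 < α → ∀ x : Fin N → ℝ, (∀ i, 0 < x i) → f (α • x) < α * f x) ∧
  0 < sInf (f '' PosCone N)

/-- An MSP mapping: every coordinate function is an MSP function. -/
def IsMSPMap {N : ℕ} (T : (Fin N → ℝ) → (Fin N → ℝ)) : Prop :=
  ∀ i, IsMSPFun (fun x => T x i)

/-- A monotone norm on `ℝ^N`: a genuine norm that is order-preserving on the
nonnegative cone. -/
def IsMonoNorm {N : ℕ} (nrm : (Fin N → ℝ) → ℝ) : Prop :=
  (∀ x : Fin N → ℝ, nrm x = 0 ↔ x = 0) ∧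
  (∀ (a : ℝ) (x : Fin N → ℝ), nrm (a • x) = |a| * nrm x) ∧
  (∀ x y : Fin N → ℝ, nrm (x + y) ≤ nrm x + nrm y) ∧
  (∀ x y : Fin N → ℝ, (∀ i, 0 ≤ x i) → (∀ i, 0 ≤ y i) → x ≤ y → nrm x ≤ nrm y)

/-- `chGain a b = |aᴴ b|`, the modulus of the inner product between the aggregated
channel `a` and the beamformer `b` (conjugate-transpose convention). -/
noncomputable def chGain {K : ℕ} (a b : Fin K → ℂ) : ℝ :=
  ‖∑ i, (starRingEnd ℂ) (a i) * b i‖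

/-- The instantaneous SINR of user `u` at power vector `p` and sample `ω`. -/
noncomputable def instSINR {K N : ℕ} {Ω : Type*}
    (hch : Fin N → Ω → (Fin K → ℂ)) (v : Ω → (Fin K → ℂ)) (σsq : ℝ) (u : Fin N)
    (p : Fin N → ℝ) (ω : Ω) : ℝ :=
  p u * chGain (hch u ω) (v ω) ^ 2 /
    (∑ k ∈ Finset.univ.erase u, p k * chGain (hch k ω) (v ω) ^ 2 + σsq)

lemma chGain_nonneg' {K : ℕ} (a b : Fin K → ℂ) :
    0 ≤ ‖∑ i, (starRingEnd ℂ) (a i) * b i‖ := norm_nonneg _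

lemma aux_log_scale {a b t : ℝ} (ha : 0 < a) (hab : a ≤ b) (ht : 0 ≤ t) :
    a * Real.log (1 + b * t) ≤ b * Real.log (1 + a * t) := by
  have hb : 0 < b := ha.trans_le hab
  have hat : 0 ≤ a * t := mul_nonneg ha.le ht
  have h1 : (1:ℝ) ≤ b / a := (one_le_div ha).mpr hab
  have hber : 1 + b * t ≤ (1 + a * t) ^ (b / a) := by
    have h := one_add_mul_self_le_rpow_one_add (s := a * t) (by linarith) h1
    have he : 1 + b * t = 1 + (b / a) * (a * t) := by field_simp
    rw [he]; exact h
  have hbt : 0 ≤ b * t := mul_nonneg hb.le ht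
  have hlog : Real.log (1 + b * t) ≤ (b / a) * Real.log (1 + a * t) := by
    have h2 : Real.log (1 + b * t) ≤ Real.log ((1 + a * t) ^ (b / a)) :=
      Real.log_le_log (by linarith) hber
    rwa [Real.log_rpow (by linarith)] at h2
  calc a * Real.log (1 + b * t) ≤ a * ((b / a) * Real.log (1 + a * t)) :=
        mul_le_mul_of_nonneg_left hlog ha.le
  _ = b * Real.log (1 + a * t) := by field_simp

lemma aux_sinr_mono {a b G Ia Ib : ℝ} (ha : 0 < a) (hab : a ≤ b) (hG : 0 ≤ G)
    (hIa : 0 < Ia) (hIab : Ia ≤ Ib) :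
    a * Real.log (1 + b * G / Ib) ≤ b * Real.log (1 + a * G / Ia) := by
  have hIb : 0 < Ib := hIa.trans_le hIab
  have h1 : a * Real.log (1 + b * G / Ib) ≤ b * Real.log (1 + a * G / Ib) := by
    have h := aux_log_scale ha hab (div_nonneg hG hIb.le)
    simpa [mul_div_assoc] using h
  refine h1.trans (mul_le_mul_of_nonneg_left ?_ (ha.trans_le hab).le)
  have h2 : a * G / Ib ≤ a * G / Ia :=
    div_le_div_of_nonneg_left (mul_nonneg ha.le hG) hIa hIab
  have h3 : 0 ≤ a * G / Ib := div_nonneg (mul_nonneg ha.le hG) hIb.le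
  exact Real.log_le_log (by linarith) (by linarith)

lemma aux_sinr_scale_le {α c G A σ : ℝ} (hα : 1 ≤ α) (hc : 0 ≤ c) (hG : 0 ≤ G)
    (hA : 0 ≤ A) (hσ : 0 < σ) :
    c * G / (A + σ) ≤ α * c * G / (α * A + σ) := by
  have hαA : 0 ≤ α * A := mul_nonneg (by linarith) hA
  rw [div_le_div_iff₀ (by linarith) (by linarith)]
  nlinarith [mul_nonneg (mul_nonneg (mul_nonneg hc hG) hσ.le) (by linarith : (0:ℝ) ≤ α - 1)]

lemma aux_sinr_scale_lt {α c G A σ : ℝ} (hα : 1 < α) (hc : 0 < c) (hG : 0 < G)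
    (hA : 0 ≤ A) (hσ : 0 < σ) :
    c * G / (A + σ) < α * c * G / (α * A + σ) := by
  have hαA : 0 ≤ α * A := mul_nonneg (by linarith) hA
  rw [div_lt_div_iff₀ (by linarith) (by linarith)]
  nlinarith [mul_pos (mul_pos (mul_pos hc hG) hσ) (by linarith : (0:ℝ) < α - 1)]

lemma pos_meas_of_compl_null {Ω : Type*} [MeasurableSpace Ω] (P : Measure Ω)
    [IsProbabilityMeasure P] {s : Set Ω} (h : P sᶜ = 0) : 0 < P s := by
  by_contra h'
  push_neg at h'
  have hs0 : P s = 0 := le_antisymm (by simpa using h') zero_le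
  have hle := measure_union_le (μ := P) s sᶜ
  rw [Set.union_compl_self, hs0, h] at hle
  simp [measure_univ] at hle

lemma integral_pos_of_ae_pos {Ω : Type*} [MeasurableSpace Ω] (P : Measure Ω)
    [IsProbabilityMeasure P] {f : Ω → ℝ} (hf : Integrable f P)
    (h0 : ∀ ω, 0 ≤ f ω) (hpos : ∀ᵐ ω ∂P, 0 < f ω) : 0 < ∫ ω, f ω ∂P := by
  rw [integral_pos_iff_support_of_nonneg_ae (Filter.Eventually.of_forall h0) hf]
  apply pos_meas_of_compl_null
  refine measure_mono_null ?_ (by simpa [ae_iff] using hpos)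
  intro ω hω
  simp only [Set.mem_compl_iff, Function.mem_support, not_not] at hω
  simp [Set.mem_setOf_eq, hω]
/-- Proposition 3: with the achievable rate `r_u(p) = E[log(1 + s_u(p, ω))]` well
defined and finite on the positive cone, `E[|h_uᴴ v_u|²] < ∞`, and `|h_uᴴ v_u| ≠ 0`
almost surely, the function `f_u(p) = p_u / r_u(p)` is an MSP function. -/
theorem stmt10 {K N : ℕ} {Ω : Type*} [MeasurableSpace Ω]
    (P : Measure Ω) [IsProbabilityMeasure P]
    (σsq : ℝ) (hσ : 0 < σsq) (u : Fin N)
    (hch : Fin N → Ω → (Fin K → ℂ)) (v : Ω → (Fin K → ℂ))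
    (hrint : ∀ p : Fin N → ℝ, (∀ i, 0 < p i) →
      Integrable (fun ω => Real.log (1 + instSINR hch v σsq u p ω)) P)
    (hgain : Integrable (fun ω => chGain (hch u ω) (v ω) ^ 2) P)
    (hne : ∀ᵐ ω ∂P, chGain (hch u ω) (v ω) ≠ 0) :
    IsMSPFun (fun p : Fin N → ℝ =>
      p u / ∫ ω, Real.log (1 + instSINR hch v σsq u p ω) ∂P) := by
  classical
  set r : (Fin N → ℝ) → ℝ :=
    fun p => ∫ ω, Real.log (1 + instSINR hch v σsq u p ω) ∂P with hrdef
  -- basic abbreviations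
  have hGnn : ∀ k ω, 0 ≤ chGain (hch k ω) (v ω) ^ 2 := fun k ω => sq_nonneg _
  have hAnn : ∀ (p : Fin N → ℝ), (∀ i, 0 < p i) → ∀ ω,
      0 ≤ ∑ k ∈ Finset.univ.erase u, p k * chGain (hch k ω) (v ω) ^ 2 := by
    intro p hp ω
    exact Finset.sum_nonneg fun k _ => mul_nonneg (hp k).le (hGnn k ω)
  have hs_nonneg : ∀ (p : Fin N → ℝ), (∀ i, 0 < p i) → ∀ ω,
      0 ≤ instSINR hch v σsq u p ω := by
    intro p hp ω
    exact div_nonneg (mul_nonneg (hp u).le (hGnn u ω)) (by linarith [hAnn p hp ω])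
  have hs_pos : ∀ (p : Fin N → ℝ), (∀ i, 0 < p i) → ∀ ω,
      chGain (hch u ω) (v ω) ≠ 0 → 0 < instSINR hch v σsq u p ω := by
    intro p hp ω hω
    have hg : 0 < chGain (hch u ω) (v ω) := (chGain_nonneg' _ _).lt_of_ne (Ne.symm hω)
    exact div_pos (mul_pos (hp u) (pow_pos hg 2)) (by linarith [hAnn p hp ω])
  have hL_nonneg : ∀ (p : Fin N → ℝ), (∀ i, 0 < p i) → ∀ ω,
      0 ≤ Real.log (1 + instSINR hch v σsq u p ω) := by
    intro p hp ω
    exact Real.log_nonneg (by linarith [hs_nonneg p hp ω])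
  have hr_pos : ∀ (p : Fin N → ℝ), (∀ i, 0 < p i) → 0 < r p := by
    intro p hp
    refine integral_pos_of_ae_pos P (hrint p hp) (hL_nonneg p hp) ?_
    filter_upwards [hne] with ω hω
    exact Real.log_pos (by linarith [hs_pos p hp ω hω])
  refine ⟨?_, ?_, ?_, ?_⟩
  · -- positivity
    intro p hp
    exact div_pos (hp u) (hr_pos p hp)
  · -- monotonicity
    intro p q hp hq hpq
    simp only
    rw [div_le_div_iff₀ (hr_pos p hp) (hr_pos q hq), hrdef, ← integral_const_mul,
      ← integral_const_mul]
    refine integral_mono ((hrint q hq).const_mul _) ((hrint p hp).const_mul _)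
      fun ω => ?_
    simp only [instSINR]
    exact aux_sinr_mono (hp u) (hpq u) (hGnn u ω) (by linarith [hAnn p hp ω])
      (add_le_add_left (Finset.sum_le_sum fun k _ =>
        mul_le_mul_of_nonneg_right (hpq k) (hGnn k ω)) σsq)
  · -- scalability
    intro α hα p hp
    have hp' : ∀ i, 0 < (α • p) i := by
      intro i
      simp only [Pi.smul_apply, smul_eq_mul]
      exact mul_pos (by linarith) (hp i)
    have hsmul_eq : ∀ ω, instSINR hch v σsq u (α • p) ω =
        α * p u * chGain (hch u ω) (v ω) ^ 2 /
          (α * ∑ k ∈ Finset.univ.erase u, p k * chGain (hch k ω) (v ω) ^ 2 + σsq) := by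
      intro ω
      have hsum : ∑ k ∈ Finset.univ.erase u, α * p k * chGain (hch k ω) (v ω) ^ 2
          = α * ∑ k ∈ Finset.univ.erase u, p k * chGain (hch k ω) (v ω) ^ 2 := by
        rw [Finset.mul_sum]
        exact Finset.sum_congr rfl fun k _ => mul_assoc _ _ _
      simp only [instSINR, Pi.smul_apply, smul_eq_mul, hsum]
    have hrlt : r p < r (α • p) := by
      have hdiff : 0 < ∫ ω, (Real.log (1 + instSINR hch v σsq u (α • p) ω)
          - Real.log (1 + instSINR hch v σsq u p ω)) ∂P := by
        refine integral_pos_of_ae_pos P ((hrint _ hp').sub (hrint p hp)) ?_ ?_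
        · intro ω
          have hle : instSINR hch v σsq u p ω ≤ instSINR hch v σsq u (α • p) ω := by
            rw [hsmul_eq ω]
            exact aux_sinr_scale_le hα.le (hp u).le (hGnn u ω) (hAnn p hp ω) hσ
          have := Real.log_le_log (by linarith [hs_nonneg p hp ω]) (by linarith :
            1 + instSINR hch v σsq u p ω ≤ 1 + instSINR hch v σsq u (α • p) ω)
          linarith
        · filter_upwards [hne] with ω hω
          have hg : 0 < chGain (hch u ω) (v ω) := (chGain_nonneg' _ _).lt_of_ne (Ne.symm hω)
          have hlt : instSINR hch v σsq u p ω < instSINR hch v σsq u (α • p) ω := by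
            rw [hsmul_eq ω]
            exact aux_sinr_scale_lt hα (hp u) (pow_pos hg 2) (hAnn p hp ω) hσ
          have := Real.log_lt_log (by linarith [hs_nonneg p hp ω]) (by linarith :
            1 + instSINR hch v σsq u p ω < 1 + instSINR hch v σsq u (α • p) ω)
          linarith
      rw [integral_sub (hrint _ hp') (hrint p hp)] at hdiff
      simp only [hrdef]
      linarith
    simp only
    have h1 : (α • p) u = α * p u := by simp [smul_eq_mul]
    rw [h1, mul_div_assoc]
    have hαpu : 0 < α * p u := mul_pos (by linarith) (hp u)
    exact mul_lt_mul_of_pos_left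
      (div_lt_div_of_pos_left (hp u) (hr_pos p hp) hrlt) (by linarith : (0:ℝ) < α)
  · -- positive infimum
    have hC : 0 < ∫ ω, chGain (hch u ω) (v ω) ^ 2 ∂P := by
      refine integral_pos_of_ae_pos P hgain (fun ω => hGnn u ω) ?_
      filter_upwards [hne] with ω hω
      exact pow_pos ((chGain_nonneg' _ _).lt_of_ne (Ne.symm hω)) 2
    set C := ∫ ω, chGain (hch u ω) (v ω) ^ 2 ∂P with hCdef
    have hbound : ∀ (p : Fin N → ℝ), (∀ i, 0 < p i) → σsq / C ≤ p u / r p := by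
      intro p hp
      rw [div_le_div_iff₀ hC (hr_pos p hp)]
      have hrle : r p ≤ (p u / σsq) * C := by
        rw [hrdef, hCdef, ← integral_const_mul]
        refine integral_mono (hrint p hp) (hgain.const_mul _) fun ω => ?_
        have hs : instSINR hch v σsq u p ω ≤ p u / σsq * chGain (hch u ω) (v ω) ^ 2 := by
          rw [div_mul_eq_mul_div]
          exact div_le_div_of_nonneg_left (mul_nonneg (hp u).le (hGnn u ω)) hσ
            (by linarith [hAnn p hp ω])
        have hlog := Real.log_le_sub_one_of_pos
          (by linarith [hs_nonneg p hp ω] : (0:ℝ) < 1 + instSINR hch v σsq u p ω)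
        simp only
        linarith
      have : σsq * r p ≤ σsq * ((p u / σsq) * C) :=
        mul_le_mul_of_nonneg_left hrle hσ.le
      calc σsq * r p ≤ σsq * ((p u / σsq) * C) := this
      _ = p u * C := by field_simp
    have hne_img : ((fun p : Fin N → ℝ => p u / r p) '' PosCone N).Nonempty :=
      ⟨_, ⟨fun _ => 1, fun i => one_pos, rfl⟩⟩
    calc (0:ℝ) < σsq / C := div_pos hσ hC
    _ ≤ sInf ((fun p : Fin N → ℝ => p u / r p) '' PosCone N) := by
        refine le_csInf hne_img ?_
        rintro y ⟨p, hp, rfl⟩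
        exact hbound p hp
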